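/- Suppose n is even and 2 ≤ n ≤ 2g−2, and let J ⊆ E be the ideal generated by the Macdonald relations of weight n+1 with q = 0. Then for any pairwise distinct indices k_1,…,k_{n/2} ∈ {1,…,g} one has the congruence y·(y − x_{k_1}x'_{k_1})⋯(y − x_{k_{n/2}}x'_{k_{n/2}}) ≡ y·(y − x_1x'_1)(y − x_2x'_2)⋯(y − x_{n/2}x'_{n/2}) modulo J. -/

import Mathlib

noncomputable section

open Polynomial

/-- The free graded-commutative ring `E = Λ_ℤ⟨x₁,…,x_g,x'₁,…,x'_g⟩ ⊗ ℤ[y]`,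
realized as the exterior algebra over `ℤ[y]` on a free module of rank `2g`. -/
abbrev E (g : ℕ) : Type :=
  ExteriorAlgebra (Polynomial ℤ) ((Fin g ⊕ Fin g) → Polynomial ℤ)

/-- The degree-one generator `x_i`. -/
def x (g : ℕ) (i : Fin g) : E g :=
  ExteriorAlgebra.ι (Polynomial ℤ) (Pi.single (Sum.inl i) 1)

/-- The degree-one generator `x'_i`. -/
def x' (g : ℕ) (i : Fin g) : E g :=
  ExteriorAlgebra.ι (Polynomial ℤ) (Pi.single (Sum.inr i) 1)

/-- The degree-two polynomial generator `y`. -/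
def y (g : ℕ) : E g :=
  algebraMap (Polynomial ℤ) (E g) Polynomial.X

/-- The Macdonald relation `x_{i₁}⋯x_{i_a}·x'_{j₁}⋯x'_{j_b}·(y−x_{k₁}x'_{k₁})⋯(y−x_{k_c}x'_{k_c})·y^q`
associated to lists of indices `I, J, K` and `q : ℕ`. -/
def macRel (g : ℕ) (I J K : List (Fin g)) (q : ℕ) : E g :=
  (I.map (x g)).prod * (J.map (x' g)).prod *
    (K.map (fun k => y g - x g k * x' g k)).prod * (y g) ^ q

/-- The two-sided ideal `I_Mac` generated by all Macdonald relations of weight `n+1`. -/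
def IMac (g n : ℕ) : TwoSidedIdeal (E g) :=
  TwoSidedIdeal.span {z : E g | ∃ (I J K : List (Fin g)) (q : ℕ),
    (I ++ J ++ K).Nodup ∧ I.length + J.length + 2 * K.length + q = n + 1 ∧
    z = macRel g I J K q}

/-- The monomial `x_A x'_B y^q`. -/
def emonomial (g : ℕ) (A B : Finset (Fin g)) (q : ℕ) : E g :=
  ((A.sort (· ≤ ·)).map (x g)).prod * ((B.sort (· ≤ ·)).map (x' g)).prod * (y g) ^ q

/-- The degree-`s` homogeneous component `E^s`, the ℤ-span of the monomials of degree `s`. -/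
def Ecomp (g s : ℕ) : Submodule ℤ (E g) :=
  Submodule.span ℤ {z : E g | ∃ (A B : Finset (Fin g)) (q : ℕ),
    A.card + B.card + 2 * q = s ∧ z = emonomial g A B q}

/-! ### Auxiliary lemmas -/

section Aux

variable {R M : Type*} [CommRing R] [AddCommGroup M] [Module R M]

open ExteriorAlgebra in
theorem aux_commute_pair_single (u v w : M) :
    Commute (ι R u * ι R v) (ι R w) := by
  have h : ∀ p q : M, ι R p * ι R q = -(ι R q * ι R p) := fun p q =>
    eq_neg_of_add_eq_zero_left (ι_add_mul_swap p q)
  show (ι R u * ι R v) * ι R w = ι R w * (ι R u * ι R v)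
  calc (ι R u * ι R v) * ι R w = ι R u * (ι R v * ι R w) := mul_assoc _ _ _
    _ = -(ι R u * ι R w) * ι R v := by rw [h v w, mul_neg, neg_mul, mul_assoc]
    _ = ι R w * (ι R u * ι R v) := by rw [h u w, neg_neg, mul_assoc]

open ExteriorAlgebra in
theorem aux_commute_pair (u v w z : M) :
    Commute (ι R u * ι R v) (ι R w * ι R z) :=
  (aux_commute_pair_single u v w).mul_right (aux_commute_pair_single u v z)

end Aux

/-- Shorthand for the factor `y − x_k x'_k`. -/
def fFac (g : ℕ) (k : Fin g) : E g := y g - x g k * x' g k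

theorem y_commute (g : ℕ) (z : E g) : Commute (y g) z :=
  Algebra.commutes Polynomial.X z

theorem fFac_comm (g : ℕ) (k l : Fin g) : Commute (fFac g k) (fFac g l) := by
  unfold fFac
  have hxx : Commute (x g k * x' g k) (x g l * x' g l) := aux_commute_pair _ _ _ _
  exact Commute.sub_left (y_commute g _) (Commute.sub_right ((y_commute g _).symm) hxx)

theorem fFac_pairwise (g : ℕ) (K : List (Fin g)) :
    (K.map (fFac g)).Pairwise Commute := by
  induction K with
  | nil => simp
  | cons a t ih =>
    rw [List.map_cons]
    exact List.Pairwise.cons (by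
      intro b hb
      obtain ⟨c, _, rfl⟩ := List.mem_map.1 hb
      exact fFac_comm g a c) ih

theorem prod_perm (g : ℕ) {K K' : List (Fin g)} (h : K.Perm K') :
    (K.map (fFac g)).prod = (K'.map (fFac g)).prod :=
  (h.map (fFac g)).prod_eq' (fFac_pairwise g K)

/-- The span appearing in the theorem. -/
def JId (g n : ℕ) : TwoSidedIdeal (E g) :=
  TwoSidedIdeal.span {z : E g | ∃ (I J K' : List (Fin g)),
    (I ++ J ++ K').Nodup ∧ I.length + J.length + 2 * K'.length = n + 1 ∧
    z = macRel g I J K' 0}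

/-- The basic relation: for `l ∉ K` and `2·|K| = n`,
`y·∏_K − (y − x_l x'_l)·∏_K ∈ J`. -/
theorem basic_rel (g n : ℕ) (K : List (Fin g)) (hnd : K.Nodup)
    (hlen : 2 * K.length = n) (l : Fin g) (hl : l ∉ K) :
    y g * (K.map (fFac g)).prod - fFac g l * (K.map (fFac g)).prod ∈ JId g n := by
  have hgen : macRel g [l] [] K 0 ∈ JId g n := by
    apply TwoSidedIdeal.subset_span
    refine ⟨[l], [], K, ?_, ?_, rfl⟩
    · simp [hnd, hl]
    · simp only [List.length_cons, List.length_nil]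
      omega
  have hmac : macRel g [l] [] K 0 = x g l * (K.map (fFac g)).prod := by
    simp only [macRel, List.map_cons, List.map_nil, List.prod_cons, List.prod_nil,
      pow_zero, mul_one, one_mul]
    rfl
  have key : y g * (K.map (fFac g)).prod - fFac g l * (K.map (fFac g)).prod
      = -(x' g l * macRel g [l] [] K 0) := by
    rw [hmac]
    have hanti : x g l * x' g l = -(x' g l * x g l) :=
      eq_neg_of_add_eq_zero_left (ExteriorAlgebra.ι_add_mul_swap _ _)
    rw [show y g * (K.map (fFac g)).prod - fFac g l * (K.map (fFac g)).prod
        = (x g l * x' g l) * (K.map (fFac g)).prod by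
      simp only [fFac]; rw [sub_mul, sub_sub_cancel]]
    rw [hanti, neg_mul, mul_assoc]
  rw [key]
  exact (JId g n).neg_mem <| (JId g n).mul_mem_left _ _ hgen

/-- Swap relation: replacing `m` by `l` in the list. -/
theorem swap_rel (g n : ℕ) (R : List (Fin g)) (hnd : R.Nodup)
    (hlen : 2 * (R.length + 1) = n) (l m : Fin g) (hl : l ∉ R) (hm : m ∉ R)
    (hlm : l ≠ m) :
    y g * ((m :: R).map (fFac g)).prod - y g * ((l :: R).map (fFac g)).prod
      ∈ JId g n := by
  have h1 := basic_rel g n (m :: R) (List.nodup_cons.2 ⟨hm, hnd⟩)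
    (by simpa using hlen) l (by simp [hl, hlm])
  have hml : m ≠ l := Ne.symm hlm
  have h2 := basic_rel g n (l :: R) (List.nodup_cons.2 ⟨hl, hnd⟩)
    (by simpa using hlen) m (by simp [hm, hml])
  have he : fFac g l * ((m :: R).map (fFac g)).prod
      = fFac g m * ((l :: R).map (fFac g)).prod := by
    simp only [List.map_cons, List.prod_cons]
    rw [← mul_assoc, ← mul_assoc, (fFac_comm g l m).eq]
  rw [he] at h1
  have := (JId g n).sub_mem h1 h2
  rwa [sub_sub_sub_cancel_right] at this

theorem main_rel (g n : ℕ) (d : ℕ) : ∀ (K1 K2 : List (Fin g)), K1.Nodup → K2.Nodup →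
    2 * K1.length = n → 2 * K2.length = n →
    (K1.toFinset \ K2.toFinset).card = d →
    y g * (K1.map (fFac g)).prod - y g * (K2.map (fFac g)).prod ∈ JId g n := by
  induction d with
  | zero =>
    intro K1 K2 h1 h2 hl1 hl2 hd
    have hsub : K1.toFinset ⊆ K2.toFinset := by
      rwa [Finset.card_eq_zero, Finset.sdiff_eq_empty_iff_subset] at hd
    have hcard : K2.toFinset.card ≤ K1.toFinset.card := by
      rw [List.toFinset_card_of_nodup h1, List.toFinset_card_of_nodup h2]
      omega
    have heq : K1.toFinset = K2.toFinset := Finset.eq_of_subset_of_card_le hsub hcard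
    have hperm : K1.Perm K2 := by
      have := List.toFinset_eq_iff_perm_dedup.1 heq
      rwa [h1.dedup, h2.dedup] at this
    rw [prod_perm g hperm, sub_self]
    exact (JId g n).zero_mem
  | succ d ih =>
    intro K1 K2 h1 h2 hl1 hl2 hd
    obtain ⟨m, hmmem⟩ : (K1.toFinset \ K2.toFinset).Nonempty :=
      Finset.card_pos.1 (by omega)
    have hc : K1.toFinset.card = K2.toFinset.card := by
      rw [List.toFinset_card_of_nodup h1, List.toFinset_card_of_nodup h2]; omega
    obtain ⟨l, hlmem⟩ : (K2.toFinset \ K1.toFinset).Nonempty :=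
      Finset.card_pos.1 (by rw [← Finset.card_sdiff_comm hc]; omega)
    rw [Finset.mem_sdiff, List.mem_toFinset, List.mem_toFinset] at hmmem hlmem
    obtain ⟨hmK1, hmK2⟩ := hmmem
    obtain ⟨hlK2, hlK1⟩ := hlmem
    set R := K1.erase m with hR
    have hRnd : R.Nodup := h1.erase m
    have hmR : m ∉ R := h1.not_mem_erase
    have hlR : l ∉ R := fun h => hlK1 (List.mem_of_mem_erase h)
    have hRlen : R.length + 1 = K1.length := by
      rw [hR, List.length_erase_of_mem hmK1]
      have : K1.length ≠ 0 := fun h => by simp [List.length_eq_zero_iff.1 h] at hmK1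
      omega
    have hperm1 : K1.Perm (m :: R) := List.perm_cons_erase hmK1
    have hswap := swap_rel g n R hRnd (by omega) l m hlR hmR
      (fun h => hlK1 (h ▸ hmK1))
    have hstep : y g * ((l :: R).map (fFac g)).prod
        - y g * (K2.map (fFac g)).prod ∈ JId g n := by
      apply ih (l :: R) K2 (List.nodup_cons.2 ⟨hlR, hRnd⟩) h2
        (by simp; omega) hl2
      have htf : (l :: R).toFinset = insert l R.toFinset := by simp
      have hRtf : R.toFinset = K1.toFinset.erase m := by
        ext a
        simp only [hR, List.mem_toFinset, Finset.mem_erase, h1.mem_erase_iff]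
      rw [htf, Finset.insert_sdiff_of_mem _ (List.mem_toFinset.2 hlK2), hRtf,
        Finset.erase_sdiff_comm, Finset.card_erase_of_mem
          (Finset.mem_sdiff.2 ⟨List.mem_toFinset.2 hmK1, fun h => hmK2 (List.mem_toFinset.1 h)⟩),
        hd]
      omega
    have hfinal := (JId g n).add_mem hswap hstep
    rw [sub_add_sub_cancel] at hfinal
    rwa [prod_perm g hperm1]

/-- For even `2 ≤ n ≤ 2g − 2` and pairwise distinct `k₁,…,k_{n/2}`, one has
`y·(y − x_{k₁}x'_{k₁})⋯(y − x_{k_{n/2}}x'_{k_{n/2}}) ≡ y·(y − x₁x'₁)⋯(y − x_{n/2}x'_{n/2})`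
modulo the ideal `J` generated by the Macdonald relations of weight `n+1` with `q = 0`. -/
theorem y_prod_congruent_mod_q_zero_ideal (g n : ℕ) (hg : 1 ≤ g) (heven : Even n)
    (h2 : 2 ≤ n) (h2g : n ≤ 2 * g - 2) (K : List (Fin g)) (hnd : K.Nodup)
    (hlen : K.length = n / 2) :
    y g * (K.map (fun k => y g - x g k * x' g k)).prod -
      y g * (((List.finRange g).take (n / 2)).map (fun k => y g - x g k * x' g k)).prod ∈
      TwoSidedIdeal.span {z : E g | ∃ (I J K' : List (Fin g)),
        (I ++ J ++ K').Nodup ∧ I.length + J.length + 2 * K'.length = n + 1 ∧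
        z = macRel g I J K' 0} := by
  have hhalf : 2 * (n / 2) = n := by
    obtain ⟨c, rfl⟩ := heven; omega
  have hng : n / 2 ≤ g := by omega
  have hK2nd : ((List.finRange g).take (n / 2)).Nodup :=
    (List.nodup_finRange g).sublist (List.take_sublist _ _)
  have hK2len : ((List.finRange g).take (n / 2)).length = n / 2 := by
    simp [List.length_take, hng]
  exact main_rel g n _ K _ hnd hK2nd (by omega) (by omega) rfl
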